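/- arXiv:2503.08233 — 2 statements merged into one kernel-verified Lean document; each statement's English description precedes it below -/
import Mathlib

section
/- Let Q be a finite quiver, let M be a straight representation of Q with straightening basis B, and let e be a dimension vector. Then the torus T_M = (ℂ*)^{d+c} acts on Gr_e(M) with finitely many fixed points, and every T_M-fixed point is a coordinate subrepresentation, i.e. each of its subspaces U^(i) is spanned by a subset of the basis vectors of B lying over the vertex i. In particular, there exists a constructible grading (a cocharacter of T_M) under which all elements of B have pairwise distinct weights: e.g. wt(a) = 1 for all a ∈ Q₁ and wt(b_{j,1}) = (j−1)·ℓ for the starting vertex b_{j,1} of the j-th string, where ℓ is the number of vertices of the longest string. -/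
open scoped Classical

noncomputable section

structure FinQuiver where
  V : Type
  A : Type
  [fV : Fintype V]
  [fA : Fintype A]
  [dV : DecidableEq V]
  [dA : DecidableEq A]
  src : A → V
  tgt : A → V

attribute [instance] FinQuiver.fV FinQuiver.fA FinQuiver.dV FinQuiver.dA

structure QuivRep (Q : FinQuiver) where
  M : Q.V → Type
  [acg : ∀ i, AddCommGroup (M i)]
  [mod : ∀ i, Module ℂ (M i)]
  [fd : ∀ i, FiniteDimensional ℂ (M i)]
  map : ∀ a : Q.A, M (Q.src a) →ₗ[ℂ] M (Q.tgt a)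

attribute [instance] QuivRep.acg QuivRep.mod QuivRep.fd

def QuivRep.grass {Q : FinQuiver} (R : QuivRep Q) (e : Q.V → ℕ) :
    Set (∀ i, Submodule ℂ (R.M i)) :=
  {U | (∀ a, (U (Q.src a)).map (R.map a) ≤ U (Q.tgt a)) ∧
    ∀ i, Module.finrank ℂ (U i) = e i}

def QuivRep.FlexAt {Q : FinQuiver} (R : QuivRep Q) (e : Q.V → ℕ) (i : Q.V) : Prop :=
  {W : Submodule ℂ (R.M i) | ∃ U ∈ R.grass e, U i = W}.Infinite

def QuivRep.Flex {Q : FinQuiver} (R : QuivRep Q) (e : Q.V → ℕ) : Prop :=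
  ∀ i, R.FlexAt e i

/-- A standard basis of a direct sum of windings of trees: a basis of each `M^(i)` such
that every `M_a` sends each basis vector either to zero or to a nonzero scalar multiple
of a basis vector, and (winding condition) no two basis vectors are sent by `M_a` to
multiples of the same basis vector. -/
structure ForestBasis {Q : FinQuiver} (R : QuivRep Q) where
  κ : Q.V → Type
  [fκ : ∀ i, Fintype (κ i)]
  [dκ : ∀ i, DecidableEq (κ i)]
  bas : ∀ i, Module.Basis (κ i) ℂ (R.M i)
  next : ∀ a : Q.A, κ (Q.src a) → Option (κ (Q.tgt a))
  coef : ∀ a : Q.A, κ (Q.src a) → ℂ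
  map_bas : ∀ a k, R.map a (bas (Q.src a) k) =
      Option.elim (next a k) 0 fun k' => coef a k • bas (Q.tgt a) k'
  coef_ne : ∀ a k, (next a k).isSome → coef a k ≠ 0
  next_inj : ∀ a k l, (next a k).isSome → next a k = next a l → k = l

attribute [instance] ForestBasis.fκ ForestBasis.dκ

namespace ForestBasis

variable {Q : FinQuiver} {R : QuivRep Q} (F : ForestBasis R)

/-- The set of all basis vectors (the vertex set of the coefficient quiver). -/
abbrev B := Σ i : Q.V, F.κ i

instance : Fintype F.B := by unfold ForestBasis.B; infer_instance

/-- Adjacency in the coefficient quiver `Q(M,B)`. -/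
def adj (p q : F.B) : Prop :=
  ∃ (a : Q.A) (k : F.κ (Q.src a)) (k' : F.κ (Q.tgt a)),
    F.next a k = some k' ∧ p = ⟨Q.src a, k⟩ ∧ q = ⟨Q.tgt a, k'⟩

/-- The number of connected components of the coefficient quiver; for a forest this is
the number of indecomposable direct summands of `M`. -/
def numComp : ℕ := Nat.card (Quot F.adj)

/-- The coefficient quiver is a forest: the number of vertices equals the number of
edges plus the number of connected components (i.e. every component is a tree). -/
def IsForest : Prop :=
  Fintype.card F.B =
    Nat.card {e : Σ a : Q.A, F.κ (Q.src a) // (F.next e.1 e.2).isSome} + F.numComp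

/-- The linear automorphism of `M^(i)` induced by a grading `wt` and `z ∈ ℂ*`:
each basis vector `b` is scaled by `z ^ wt b`. -/
def gradeMap (wt : F.B → ℤ) (z : ℂˣ) (i : Q.V) : R.M i →ₗ[ℂ] R.M i :=
  (F.bas i).constr ℂ fun k => ((z ^ wt ⟨i, k⟩ : ℂˣ) : ℂ) • F.bas i k

/-- The induced action of `z ∈ ℂ*` on tuples of subspaces. -/
def gact (wt : F.B → ℤ) (z : ℂˣ) (U : ∀ i, Submodule ℂ (R.M i)) :
    ∀ i, Submodule ℂ (R.M i) :=
  fun i => (U i).map (F.gradeMap wt z i)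

/-- A grading is `e`-admissible if its `ℂ*`-action preserves the quiver Grassmannian. -/
def Admissible (e : Q.V → ℕ) (wt : F.B → ℤ) : Prop :=
  ∀ (z : ℂˣ), ∀ U ∈ R.grass e, F.gact wt z U ∈ R.grass e

/-- A grading is constructible if every arrow has a fixed weight. -/
def Constructible (wt : F.B → ℤ) : Prop :=
  ∃ wtA : Q.A → ℤ, ∀ (a : Q.A) (k : F.κ (Q.src a)) (k' : F.κ (Q.tgt a)),
    F.next a k = some k' → wt ⟨Q.tgt a, k'⟩ = wt ⟨Q.src a, k⟩ + wtA a

/-- The action of a higher-rank torus obtained by combining several gradings. -/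
def mgradeMap {r : ℕ} (w : Fin r → (F.B → ℤ)) (t : Fin r → ℂˣ) (i : Q.V) :
    R.M i →ₗ[ℂ] R.M i :=
  (F.bas i).constr ℂ fun k => ((∏ j, t j ^ w j ⟨i, k⟩ : ℂˣ) : ℂ) • F.bas i k

def mgact {r : ℕ} (w : Fin r → (F.B → ℤ)) (t : Fin r → ℂˣ)
    (U : ∀ i, Submodule ℂ (R.M i)) : ∀ i, Submodule ℂ (R.M i) :=
  fun i => (U i).map (F.mgradeMap w t i)

/-- The torus `(ℂ*)^r` acts faithfully on `Gr_e(M)` via the gradings `w`. -/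
def Faithful {r : ℕ} (e : Q.V → ℕ) (w : Fin r → (F.B → ℤ)) : Prop :=
  ∀ t : Fin r → ℂˣ, (∀ U ∈ R.grass e, F.mgact w t U = U) → t = 1

end ForestBasis

end

noncomputable section

/-- The supporting arrows of `M`: arrows of `Q` on which `M` is nonzero. -/
abbrev QuivRep.SuppA {Q : FinQuiver} (R : QuivRep Q) := {a : Q.A // R.map a ≠ 0}

/-- Extension by `1` on non-supporting arrows of a tuple indexed by supporting arrows. -/
def QuivRep.nuExt {Q : FinQuiver} (R : QuivRep Q) (ν : R.SuppA → ℂˣ) (a : Q.A) : ℂˣ :=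
  if h : R.map a ≠ 0 then ν ⟨a, h⟩ else 1

/-- A straightening basis for a representation `M`: a basis of `⊕ᵢ M^(i)` whose
coefficient quiver is a disjoint union of `d` equioriented strings ("segments").
The `j`-th segment has `len j` basis vectors `b_{j,0}, …, b_{j,len j - 1}`, the vector
`b_{j,k}` lies over the vertex `vtx j k` of `Q`, and for `k+1 < len j` the arrow
`arrOf j k` of `Q` carries `b_{j,k}` to `b_{j,k+1}`; all other structure maps vanish
on basis vectors. -/
structure StraightBasis {Q : FinQuiver} (R : QuivRep Q) where
  d : ℕ
  len : Fin d → ℕ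
  len_pos : ∀ j, 0 < len j
  vtx : (j : Fin d) → Fin (len j) → Q.V
  arrOf : (j : Fin d) → Fin (len j) → Q.A
  arr_src : ∀ (j : Fin d) (k : Fin (len j)), (k : ℕ) + 1 < len j →
    Q.src (arrOf j k) = vtx j k
  arr_tgt : ∀ (j : Fin d) (k : Fin (len j)) (h : (k : ℕ) + 1 < len j),
    Q.tgt (arrOf j k) = vtx j ⟨(k : ℕ) + 1, h⟩
  bas : ∀ i, Module.Basis {p : Σ j : Fin d, Fin (len j) // vtx p.1 p.2 = i} ℂ (R.M i)
  map_bas : ∀ (a : Q.A) (p : {p : Σ j : Fin d, Fin (len j) // vtx p.1 p.2 = Q.src a}),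
      R.map a (bas (Q.src a) p) =
        if h : (p.1.2 : ℕ) + 1 < len p.1.1 ∧ arrOf p.1.1 p.1.2 = a then
          bas (Q.tgt a) ⟨⟨p.1.1, ⟨(p.1.2 : ℕ) + 1, h.1⟩⟩,
            (arr_tgt p.1.1 p.1.2 h.1).symm.trans (congrArg Q.tgt h.2)⟩
        else 0

/-- `M` is straight if it admits a straightening basis. -/
def QuivRep.IsStraight {Q : FinQuiver} (R : QuivRep Q) : Prop :=
  Nonempty (StraightBasis R)

namespace StraightBasis

variable {Q : FinQuiver} {R : QuivRep Q} (S : StraightBasis R)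

/-- The set of basis vectors: the vertex set of the coefficient quiver. -/
abbrev B (S : StraightBasis R) := Σ j : Fin S.d, Fin (S.len j)

instance : Fintype S.B := by unfold StraightBasis.B; infer_instance

/-- The vertex of `Q` over which a basis vector lies. -/
def overVtx (p : S.B) : Q.V := S.vtx p.1 p.2

/-- The fibre of the basis over a vertex of `Q`. -/
abbrev fiber (i : Q.V) := {p : S.B // S.overVtx p = i}

/-- The basis vector corresponding to `p`. -/
def bv (p : S.B) : R.M (S.overVtx p) := S.bas (S.overVtx p) ⟨p, rfl⟩

/-- The successor of a basis vector in the coefficient quiver (if any). -/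
def succOf (p : S.B) : Option S.B :=
  if h : (p.2 : ℕ) + 1 < S.len p.1 then some ⟨p.1, ⟨(p.2 : ℕ) + 1, h⟩⟩ else none

/-- The predecessor of a basis vector in the coefficient quiver (if any). -/
def predOf (p : S.B) : Option S.B :=
  if _ : 0 < (p.2 : ℕ) then
    some ⟨p.1, ⟨(p.2 : ℕ) - 1, lt_of_le_of_lt (Nat.sub_le _ _) p.2.isLt⟩⟩
  else none

/-- The torus `T_M = (ℂ*)^{d+c}`: one coordinate `γ_j` for each segment and one
coordinate `ν_a` for each arrow `a` of `Q` in the support of `M`. -/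
abbrev Torus (S : StraightBasis R) := (Fin S.d → ℂˣ) × (R.SuppA → ℂˣ)



/-- The character by which a torus element scales the basis vector `p`: the initial
coordinate `γ_j` of its segment times the product of the `ν`'s along the arrows of the
segment preceding `p`. -/
def twt (t : S.Torus) (p : S.B) : ℂˣ :=
  t.1 p.1 * ∏ m ∈ (Finset.range (p.2 : ℕ)).attach,
    R.nuExt t.2 (S.arrOf p.1 ⟨m.1, lt_trans (Finset.mem_range.mp m.2) p.2.isLt⟩)

/-- The linear action of a torus element on `M^(i)`. -/
def tmap (t : S.Torus) (i : Q.V) : R.M i →ₗ[ℂ] R.M i :=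
  (S.bas i).constr ℂ fun p => ((S.twt t p.1 : ℂˣ) : ℂ) • S.bas i p

/-- The action of the torus `T_M` on tuples of subspaces. -/
def tact (t : S.Torus) (U : ∀ i, Submodule ℂ (R.M i)) : ∀ i, Submodule ℂ (R.M i) :=
  fun i => (U i).map (S.tmap t i)

/-- The `T_M`-fixed points of the quiver Grassmannian. -/
def fixedPts (e : Q.V → ℕ) : Set (∀ i, Submodule ℂ (R.M i)) :=
  {U | U ∈ R.grass e ∧ ∀ t : S.Torus, S.tact t U = U}

/-- The `T_M`-orbit of a point. -/
def orbit (U : ∀ i, Submodule ℂ (R.M i)) : Set (∀ i, Submodule ℂ (R.M i)) :=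
  {W | ∃ t : S.Torus, W = S.tact t U}

/-- The (algebraic) cocharacter of `T_M` given by a pair of integer vectors. -/
def cochar (mγ : Fin S.d → ℤ) (mν : R.SuppA → ℤ) (z : ℂˣ) : S.Torus :=
  (fun j => z ^ mγ j, fun a => z ^ mν a)

/-- A subset `O` of the quiver Grassmannian is a one-dimensional `T_M`-orbit if it is
the orbit of a point of `Gr_e(M)`, is infinite, and coincides with the orbit of any of
its points under a single cocharacter of `T_M`. -/
def IsOneDimOrbitIn (e : Q.V → ℕ) (O : Set (∀ i, Submodule ℂ (R.M i))) : Prop :=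
  (∃ U ∈ R.grass e, O = S.orbit U) ∧ O.Infinite ∧
  ∀ x ∈ O, ∃ (mγ : Fin S.d → ℤ) (mν : R.SuppA → ℤ),
    O = {W | ∃ z : ℂˣ, W = S.tact (S.cochar mγ mν z) x}

/-- The coordinate subrepresentation spanned by the basis vectors in `K`. -/
def coordSub (K : Set S.B) : ∀ i, Submodule ℂ (R.M i) :=
  fun i => Submodule.span ℂ (⇑(S.bas i) '' {q : S.fiber i | q.1 ∈ K})

/-- The set of basis vectors lying in a given coordinate subrepresentation. -/
def coordSet (V : ∀ i, Submodule ℂ (R.M i)) : Set S.B :=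
  {p | S.bv p ∈ V (S.overVtx p)}

/-- A subset of the basis is successor closed if it is closed under taking successors
in the coefficient quiver. -/
def SuccClosed (K : Set S.B) : Prop :=
  ∀ p ∈ K, ∀ q, S.succOf p = some q → q ∈ K

/-- A subset of the basis is `e`-dimensional if it has `e i` elements over each
vertex `i` of `Q`. -/
def EDim (e : Q.V → ℕ) (K : Set S.B) : Prop :=
  ∀ i, Nat.card {p : S.B // p ∈ K ∧ S.overVtx p = i} = e i

/-- The `ℂ*`-action on `M^(i)` induced by a grading of the basis. -/
def zmap (wt : S.B → ℤ) (z : ℂˣ) (i : Q.V) : R.M i →ₗ[ℂ] R.M i :=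
  (S.bas i).constr ℂ fun p => ((z ^ wt p.1 : ℂˣ) : ℂ) • S.bas i p

/-- The `ℂ*`-action on tuples of subspaces induced by a grading. -/
def zact (wt : S.B → ℤ) (z : ℂˣ) (U : ∀ i, Submodule ℂ (R.M i)) :
    ∀ i, Submodule ℂ (R.M i) :=
  fun i => (U i).map (S.zmap wt z i)

/-- The position of a basis vector in a chosen ordering of its fibre. -/
def ordIdx (ord : ∀ i, S.fiber i ≃ Fin (Fintype.card (S.fiber i))) (p : S.B) : ℕ :=
  (ord (S.overVtx p) ⟨p, rfl⟩ : ℕ)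

/-- (SA1): over each arrow, endpoints of segments come later in the order than basis
vectors with outgoing arrows. -/
def SA1 (ord : ∀ i, S.fiber i ≃ Fin (Fintype.card (S.fiber i))) : Prop :=
  ∀ (a : Q.A) (p q : S.fiber (Q.src a)),
    R.map a (S.bas (Q.src a) p) = 0 → R.map a (S.bas (Q.src a) q) ≠ 0 →
      S.ordIdx ord q.1 < S.ordIdx ord p.1

/-- (SA2): over each arrow, the structure maps are order preserving. -/
def SA2 (ord : ∀ i, S.fiber i ≃ Fin (Fintype.card (S.fiber i))) : Prop :=
  ∀ (a : Q.A) (p q : S.fiber (Q.src a)) (p' q' : S.fiber (Q.tgt a)),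
    R.map a (S.bas (Q.src a) p) = S.bas (Q.tgt a) p' →
    R.map a (S.bas (Q.src a) q) = S.bas (Q.tgt a) q' →
      S.ordIdx ord q.1 < S.ordIdx ord p.1 → S.ordIdx ord q'.1 < S.ordIdx ord p'.1

/-- (AG1): within each fibre, the grading strictly increases with the order. -/
def AG1 (ord : ∀ i, S.fiber i ≃ Fin (Fintype.card (S.fiber i))) (wt : S.B → ℤ) : Prop :=
  ∀ (i : Q.V) (p q : S.fiber i), S.ordIdx ord q.1 < S.ordIdx ord p.1 → wt q.1 < wt p.1

/-- (AG2): each arrow of `Q` has a fixed weight for the grading. -/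
def AG2 (wt : S.B → ℤ) (wtA : Q.A → ℤ) : Prop :=
  ∀ (a : Q.A) (p : S.fiber (Q.src a)) (p' : S.fiber (Q.tgt a)),
    R.map a (S.bas (Q.src a) p) = S.bas (Q.tgt a) p' → wt p'.1 = wt p.1 + wtA a

/-- The lowest-weight component of a vector `u ∈ M^(i)` with respect to a grading. -/
def lead (wt : S.B → ℤ) (i : Q.V) (u : R.M i) : R.M i :=
  if h : (((S.bas i).repr u).support).Nonempty then
    ∑ p ∈ ((S.bas i).repr u).support.filter
        (fun p => wt p.1 =
          ((((S.bas i).repr u).support.image fun q => wt q.1).min' (h.image _))),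
      ((S.bas i).repr u) p • S.bas i p
  else 0

/-- The Bialynicki-Birula limit `lim_{z→0} z.U` of a tuple of subspaces under the
`ℂ*`-action induced by the grading `wt`: the span of the lowest-weight components of
the nonzero vectors. -/
def bblim (wt : S.B → ℤ) (U : ∀ i, Submodule ℂ (R.M i)) : ∀ i, Submodule ℂ (R.M i) :=
  fun i => Submodule.span ℂ {v | ∃ u ∈ U i, u ≠ 0 ∧ v = S.lead wt i u}

/-- The attracting set of a fixed point `V` for the `ℂ*`-action induced by `wt`. -/
def attrSet (wt : S.B → ℤ) (e : Q.V → ℕ) (V : ∀ i, Submodule ℂ (R.M i)) :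
    Set (∀ i, Submodule ℂ (R.M i)) :=
  {U | U ∈ R.grass e ∧ S.bblim wt U = V}

/-- The pair `(p, q)` is an *initial parameter* `μ^{(i)}_{ℓ,k}` (`k ↔ p ∈ K`,
`ℓ ↔ q ∉ K`) for the coordinate subrepresentation given by `K`. -/
def IsInitial (ord : ∀ i, S.fiber i ≃ Fin (Fintype.card (S.fiber i)))
    (K : Set S.B) (p q : S.B) : Prop :=
  p ∈ K ∧ q ∉ K ∧ S.overVtx p = S.overVtx q ∧ S.ordIdx ord p < S.ordIdx ord q ∧
  (S.predOf p = none ∨ ∃ p₀, S.predOf p = some p₀ ∧ p₀ ∉ K) ∧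
  (∀ q', S.succOf q = some q' → q' ∉ K →
    ∃ p', S.succOf p = some p' ∧ S.overVtx p' = S.overVtx q')

/-- The number of initial parameters of the coordinate subrepresentation given by `K`. -/
def numInitial (ord : ∀ i, S.fiber i ≃ Fin (Fintype.card (S.fiber i)))
    (K : Set S.B) : ℕ :=
  Nat.card {pq : S.B × S.B // S.IsInitial ord K pq.1 pq.2}

end StraightBasis

end

namespace StraightBasisAux

variable {Q : FinQuiver} {R : QuivRep Q}

/-- max segment length -/
def myL (S : StraightBasis R) : ℕ := Finset.univ.sup S.len

lemma len_le_myL (S : StraightBasis R) (j : Fin S.d) : S.len j ≤ myL S :=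
  Finset.le_sup (Finset.mem_univ j)

def wtN (S : StraightBasis R) (p : S.B) : ℕ := (p.1 : ℕ) * myL S + (p.2 : ℕ)

lemma wtN_inj (S : StraightBasis R) : Function.Injective (wtN S) := by
  rintro ⟨j1, k1⟩ ⟨j2, k2⟩ h
  have hk1 : (k1 : ℕ) < myL S := lt_of_lt_of_le k1.isLt (len_le_myL S j1)
  have hk2 : (k2 : ℕ) < myL S := lt_of_lt_of_le k2.isLt (len_le_myL S j2)
  have hL : 0 < myL S := lt_of_le_of_lt (Nat.zero_le _) hk1
  have h' : (j1 : ℕ) * myL S + (k1 : ℕ) = (j2 : ℕ) * myL S + (k2 : ℕ) := h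
  have hj : (j1 : ℕ) = (j2 : ℕ) := by
    have e1 : ((j1 : ℕ) * myL S + (k1 : ℕ)) / myL S = (j1 : ℕ) := by
      rw [mul_comm, Nat.mul_add_div hL, Nat.div_eq_of_lt hk1]; omega
    have e2 : ((j2 : ℕ) * myL S + (k2 : ℕ)) / myL S = (j2 : ℕ) := by
      rw [mul_comm, Nat.mul_add_div hL, Nat.div_eq_of_lt hk2]; omega
    rw [← e1, ← e2, h']
  have hjj : j1 = j2 := Fin.ext hj
  subst hjj
  have hkk : k1 = k2 := Fin.ext (by omega)
  rw [hkk]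

lemma map_arr_ne_zero (S : StraightBasis R) (j : Fin S.d) (k : Fin (S.len j))
    (h : (k : ℕ) + 1 < S.len j) : R.map (S.arrOf j k) ≠ 0 := by
  intro h0
  set a := S.arrOf j k with ha
  have hsrc : S.vtx j k = Q.src a := (S.arr_src j k h).symm
  have := S.map_bas a ⟨⟨j, k⟩, hsrc⟩
  rw [dif_pos ⟨h, rfl⟩] at this
  rw [h0] at this
  simp only [LinearMap.zero_apply] at this
  exact (Module.Basis.ne_zero _ _) this.symm

/-- the scalar 2 as a unit -/
noncomputable def z2 : ℂˣ := Units.mk0 2 two_ne_zero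

lemma z2_pow_inj : Function.Injective fun n : ℕ => ((z2 ^ n : ℂˣ) : ℂ) := by
  intro m n h
  simp only [Units.val_pow_eq_pow_val] at h
  have : ((2 : ℂ)) ^ m = (2 : ℂ) ^ n := h
  have h2 : ((2 ^ m : ℕ) : ℂ) = ((2 ^ n : ℕ) : ℂ) := by push_cast; exact this
  exact Nat.pow_right_injective le_rfl (Nat.cast_injective h2)

noncomputable def t0 (S : StraightBasis R) : S.Torus :=
  (fun j => z2 ^ ((j : ℕ) * myL S), fun _ => z2)

lemma twt_t0 (S : StraightBasis R) (p : S.B) :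
    S.twt (t0 S) p = z2 ^ wtN S p := by
  unfold StraightBasis.twt wtN
  have hfac : ∀ m : {x // x ∈ Finset.range (p.2 : ℕ)},
      R.nuExt (t0 S).2 (S.arrOf p.1 ⟨m.1, lt_trans (Finset.mem_range.mp m.2) p.2.isLt⟩)
        = z2 := by
    rintro ⟨m, hm⟩
    have hm' : m < (p.2 : ℕ) := Finset.mem_range.mp hm
    have hne : R.map (S.arrOf p.1 ⟨m, lt_trans hm' p.2.isLt⟩) ≠ 0 := by
      apply map_arr_ne_zero S p.1 ⟨m, lt_trans hm' p.2.isLt⟩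
      simp only []
      omega
    unfold QuivRep.nuExt
    exact dif_pos hne
  rw [Finset.prod_congr rfl (fun m _ => hfac m), Finset.prod_const, Finset.card_attach,
    Finset.card_range, pow_add]
  rfl

lemma twt_t0_inj (S : StraightBasis R) :
    Function.Injective fun p : S.B => ((S.twt (t0 S) p : ℂˣ) : ℂ) := by
  intro p q h
  simp only [twt_t0] at h
  exact wtN_inj S (z2_pow_inj h)

end StraightBasisAux

namespace StraightBasisAux

variable {Q : FinQuiver} {R : QuivRep Q}

lemma diag_repr {ι V : Type*} [Fintype ι] [AddCommGroup V] [Module ℂ V]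
    (b : Module.Basis ι ℂ V) (c : ι → ℂ) (u : V) (p : ι) :
    b.repr ((b.constr ℂ fun q => c q • b q) u) p = c p * b.repr u p := by
  conv_lhs => rw [← b.sum_repr u]
  rw [map_sum, map_sum]
  simp only [map_smul, Module.Basis.constr_basis, Module.Basis.repr_self, Finsupp.smul_single,
    smul_eq_mul, Finsupp.coe_finset_sum, Finset.sum_apply, Finsupp.single_apply]
  rw [Finset.sum_eq_single p]
  · simp [mul_comm]
  · intro r _ hr; simp [hr]
  · simp

lemma diag_inv {ι V : Type*} [Fintype ι] [AddCommGroup V] [Module ℂ V]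
    (b : Module.Basis ι ℂ V) (c : ι → ℂ) (hc : Function.Injective c)
    (U : Submodule ℂ V)
    (hU : ∀ u ∈ U, (b.constr ℂ fun q => c q • b q) u ∈ U) :
    ∀ u ∈ U, ∀ p ∈ (b.repr u).support, b p ∈ U := by
  set D := b.constr ℂ fun q => c q • b q with hDdef
  suffices h : ∀ n (u : V), u ∈ U → (b.repr u).support.card ≤ n →
      ∀ p ∈ (b.repr u).support, b p ∈ U by
    intro u hu p hp; exact h _ u hu le_rfl p hp
  intro n
  induction n with
  | zero =>
    intro u hu hcard p hp
    rw [Nat.le_zero, Finset.card_eq_zero] at hcard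
    rw [hcard] at hp; simp at hp
  | succ n ih =>
    intro u hu hcard p hp
    set f := b.repr u with hf
    have hvU : D u - c p • u ∈ U := U.sub_mem (hU u hu) (U.smul_mem _ hu)
    have hreprv : ∀ r, b.repr (D u - c p • u) r = (c r - c p) * f r := by
      intro r
      rw [map_sub, map_smul, Finsupp.sub_apply, Finsupp.smul_apply, diag_repr,
        smul_eq_mul, sub_mul]
    have hsupp : (b.repr (D u - c p • u)).support = f.support.erase p := by
      ext r
      simp only [Finsupp.mem_support_iff, hreprv, Finset.mem_erase, mul_ne_zero_iff,
        sub_ne_zero, ne_eq]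
      constructor
      · rintro ⟨h1, h2⟩; exact ⟨fun h => h1 (by rw [h]), h2⟩
      · rintro ⟨h1, h2⟩; exact ⟨fun h => h1 (hc h), h2⟩
    have hq : ∀ q ∈ f.support.erase p, b q ∈ U := by
      intro q hq'
      refine ih (D u - c p • u) hvU ?_ q (by rw [hsupp]; exact hq')
      rw [hsupp, Finset.card_erase_of_mem hp]
      omega
    have hsum : u = ∑ q ∈ f.support, f q • b q := by
      conv_lhs => rw [← b.linearCombination_repr u]
      rfl
    have hkey : f p • b p = u - ∑ q ∈ f.support.erase p, f q • b q := by
      rw [hsum, ← Finset.add_sum_erase _ _ hp]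
      abel
    have hmem : f p • b p ∈ U := by
      rw [hkey]
      exact U.sub_mem hu (Submodule.sum_mem U fun q hq' => U.smul_mem _ (hq q hq'))
    have hfp : f p ≠ 0 := Finsupp.mem_support_iff.mp hp
    have := U.smul_mem (f p)⁻¹ hmem
    rwa [smul_smul, inv_mul_cancel₀ hfp, one_smul] at this

lemma mem_coordSet_iff (S : StraightBasis R) (U : ∀ i, Submodule ℂ (R.M i))
    {i : Q.V} (p : S.fiber i) :
    p.1 ∈ S.coordSet U ↔ S.bas i p ∈ U i := by
  obtain ⟨x, h⟩ := p
  subst h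
  exact Iff.rfl

lemma fixed_coord (S : StraightBasis R) (e : Q.V → ℕ) :
    ∀ U ∈ S.fixedPts e, U = S.coordSub (S.coordSet U) := by
  intro U hU
  funext i
  have hDinv : ∀ u ∈ U i, S.tmap (t0 S) i u ∈ U i := by
    intro u hu
    have h1 : (U i).map (S.tmap (t0 S) i) = U i := congrFun (hU.2 (t0 S)) i
    rw [← h1]
    exact Submodule.mem_map_of_mem hu
  have hdiag : ∀ u ∈ U i, ∀ p ∈ ((S.bas i).repr u).support, S.bas i p ∈ U i := by
    refine diag_inv (S.bas i) (fun p => ((S.twt (t0 S) p.1 : ℂˣ) : ℂ)) ?_ (U i) ?_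
    · intro p q h
      exact Subtype.ext (twt_t0_inj S h)
    · intro u hu
      exact hDinv u hu
  apply le_antisymm
  · intro u hu
    have hsum : u = ∑ p ∈ ((S.bas i).repr u).support, (S.bas i).repr u p • S.bas i p := by
      conv_lhs => rw [← (S.bas i).linearCombination_repr u]
      rfl
    rw [hsum]
    refine Submodule.sum_mem _ fun p hp => Submodule.smul_mem _ _ ?_
    exact Submodule.subset_span ⟨p, (mem_coordSet_iff S U p).mpr (hdiag u hu p hp), rfl⟩
  · rw [StraightBasis.coordSub]
    refine Submodule.span_le.mpr ?_
    rintro v ⟨q, hq, rfl⟩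
    exact (mem_coordSet_iff S U q).mp hq

end StraightBasisAux



/-- Let `M` be a straight representation of a finite quiver `Q` with
straightening basis `B` and `e` a dimension vector.  Then the torus `T_M = (ℂ*)^{d+c}`
acts on `Gr_e(M)` with finitely many fixed points, every fixed point is a coordinate
subrepresentation, and there is a constructible grading of `B` (a cocharacter of `T_M`)
with pairwise distinct weights. -/
theorem straight_finitely_many_fixed_points {Q : FinQuiver} {R : QuivRep Q}
    (S : StraightBasis R) (e : Q.V → ℕ) :
    (S.fixedPts e).Finite ∧
    (∀ U ∈ S.fixedPts e, ∃ K : Set S.B, U = S.coordSub K) ∧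
    (∃ (wt : S.B → ℤ) (wtA : Q.A → ℤ), Function.Injective wt ∧
      ∀ p q : S.B, S.succOf p = some q → wt q = wt p + wtA (S.arrOf p.1 p.2)) := by
  refine ⟨?_, ?_, ?_⟩
  · apply Set.Finite.subset (Set.finite_range S.coordSub)
    intro U hU
    exact ⟨S.coordSet U, (StraightBasisAux.fixed_coord S e U hU).symm⟩
  · intro U hU
    exact ⟨S.coordSet U, StraightBasisAux.fixed_coord S e U hU⟩
  · refine ⟨fun p => (StraightBasisAux.wtN S p : ℤ), fun _ => 1, ?_, ?_⟩
    · intro p q h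
      exact StraightBasisAux.wtN_inj S (Nat.cast_injective h)
    · intro p q hs
      rw [StraightBasis.succOf] at hs
      split_ifs at hs with h
      · cases hs
        unfold StraightBasisAux.wtN
        push_cast
        ring
end

section
/- Let Q be the quiver 1 → 2 ← 3, let M be the representation with M^(i) = ℂ³ for i = 1,2,3 and both structure maps equal to the identity, and let e = (1,2,1). Let B = {b_{i,k} : i ∈ [3], k ∈ [3]} be the standard basis and let the torus T = (ℂ*)^5 act by t.b_{1,k} = t_k t_4 · b_{1,k}, t.b_{2,k} = t_k · b_{2,k}, t.b_{3,k} = t_k t_5 · b_{3,k}. Then Gr_e(M) contains infinitely many one-dimensional T-orbits; in particular the T-action is not skeletal. Concretely, the points q_{a,c} = (⟨b_{1,2} + a·b_{1,3}⟩, ⟨b_{2,2}, b_{2,3}⟩, ⟨b_{3,2} + c·b_{3,3}⟩) for (a,c) ∈ ℂ² lie in Gr_e(M), and t.q_{a,c} = q_{(t₃/t₂)a, (t₃/t₂)c}, so the T-orbit of q_{a,c} is one-dimensional whenever (a,c) ≠ (0,0), and q_{a,c} and q_{a',c'} lie in distinct orbits whenever (a:c) ≠ (a':c') in ℙ¹.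 -/
open scoped Classical

noncomputable section

namespace QGExample

/-- The vector space `ℂ³` at each of the three vertices. -/
abbrev V3 := Fin 3 → ℂ

/-- The standard basis vectors `b_{i,k}` (we only record the `k`-index; `k : Fin 3`
is `0`-based, so `b_{i,2} = e 1` and `b_{i,3} = e 2`). -/
def e (k : Fin 3) : V3 := Pi.single k 1

/-- The diagonal linear map scaling the `k`-th coordinate by `c k`. -/
def diagMap (c : Fin 3 → ℂˣ) : V3 →ₗ[ℂ] V3 :=
  LinearMap.pi fun k => ((c k : ℂ)) • LinearMap.proj k

/-- The action of `t ∈ T = (ℂ*)^5` on tuples of subspaces: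
`t.b_{1,k} = t_k t_4 b_{1,k}`, `t.b_{2,k} = t_k b_{2,k}`, `t.b_{3,k} = t_k t_5 b_{3,k}`. -/
def act (t : Fin 5 → ℂˣ) (U : Submodule ℂ V3 × Submodule ℂ V3 × Submodule ℂ V3) :
    Submodule ℂ V3 × Submodule ℂ V3 × Submodule ℂ V3 :=
  (U.1.map (diagMap fun k => t ⟨k, by omega⟩ * t 3),
   U.2.1.map (diagMap fun k => t ⟨k, by omega⟩),
   U.2.2.map (diagMap fun k => t ⟨k, by omega⟩ * t 4))

/-- The `T`-orbit of a point. -/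
def orbit (x : Submodule ℂ V3 × Submodule ℂ V3 × Submodule ℂ V3) :
    Set (Submodule ℂ V3 × Submodule ℂ V3 × Submodule ℂ V3) :=
  {y | ∃ t : Fin 5 → ℂˣ, y = act t x}

/-- One-dimensional `T`-orbits of points of a set `X`: infinite orbits which coincide
with the orbit of any of their points under a single cocharacter `ℂ* → T`. -/
def IsOneDimOrbitIn (X : Set (Submodule ℂ V3 × Submodule ℂ V3 × Submodule ℂ V3))
    (O : Set (Submodule ℂ V3 × Submodule ℂ V3 × Submodule ℂ V3)) : Prop :=
  (∃ x ∈ X, O = orbit x) ∧ O.Infinite ∧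
  ∀ x ∈ O, ∃ m : Fin 5 → ℤ, O = {y | ∃ z : ℂˣ, y = act (fun j => z ^ m j) x}

/-- The points `q_{a,c} = (⟨b_{1,2} + a b_{1,3}⟩, ⟨b_{2,2}, b_{2,3}⟩, ⟨b_{3,2} + c b_{3,3}⟩)`. -/
def q (a c : ℂ) : Submodule ℂ V3 × Submodule ℂ V3 × Submodule ℂ V3 :=
  (ℂ ∙ (e 1 + a • e 2), Submodule.span ℂ {e 1, e 2}, ℂ ∙ (e 1 + c • e 2))

end QGExample

end

noncomputable section
namespace QGExample

/-- The quiver Grassmannian `Gr_{(1,2,1)}(M)` for the quiver `1 → 2 ← 3` and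
`M = ℂ³ → ℂ³ ← ℂ³` with identity structure maps: triples `(U₁, U₂, U₃)` with
`U₁ ⊆ U₂ ⊇ U₃` of dimensions `(1,2,1)`. -/
def grSink : Set (Submodule ℂ V3 × Submodule ℂ V3 × Submodule ℂ V3) :=
  {U | U.1 ≤ U.2.1 ∧ U.2.2 ≤ U.2.1 ∧
    Module.finrank ℂ U.1 = 1 ∧ Module.finrank ℂ U.2.1 = 2 ∧ Module.finrank ℂ U.2.2 = 1}

/-! ### Auxiliary lemmas -/

lemma diagMap_apply (c : Fin 3 → ℂˣ) (v : V3) (k : Fin 3) :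
    diagMap c v k = (c k : ℂ) * v k := rfl

lemma e_apply (j k : Fin 3) : e j k = if k = j then 1 else 0 := by
  simp [e, Pi.single_apply]

lemma diagMap_e (c : Fin 3 → ℂˣ) (j : Fin 3) : diagMap c (e j) = (c j : ℂ) • e j := by
  funext k
  by_cases h : k = j <;> simp [diagMap_apply, e_apply, h]

lemma map_span_singleton (f : V3 →ₗ[ℂ] V3) (v : V3) :
    (ℂ ∙ v).map f = ℂ ∙ (f v) := by
  rw [Submodule.map_span, Set.image_singleton]

lemma line_map (c : Fin 3 → ℂˣ) (a : ℂ) :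
    (ℂ ∙ (e 1 + a • e 2)).map (diagMap c)
      = ℂ ∙ (e 1 + ((((c 2) * (c 1)⁻¹ : ℂˣ) : ℂ) * a) • e 2) := by
  rw [map_span_singleton]
  have h : diagMap c (e 1 + a • e 2)
      = (c 1 : ℂ) • (e 1 + ((((c 2) * (c 1)⁻¹ : ℂˣ) : ℂ) * a) • e 2) := by
    funext k
    fin_cases k <;> simp [diagMap_apply, e_apply, Units.val_mul] <;> field_simp
  rw [h, Submodule.span_singleton_smul_eq (c 1).isUnit]

lemma plane_map (c : Fin 3 → ℂˣ) :
    (Submodule.span ℂ {e 1, e 2}).map (diagMap c) = Submodule.span ℂ {e 1, e 2} := by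
  rw [Submodule.map_span, Set.image_insert_eq, Set.image_singleton, diagMap_e, diagMap_e]
  rw [Submodule.span_insert, Submodule.span_insert,
    Submodule.span_singleton_smul_eq (c 1).isUnit,
    Submodule.span_singleton_smul_eq (c 2).isUnit]

lemma ratio (x y z : ℂˣ) : (x * z) * (y * z)⁻¹ = x * y⁻¹ := by group

lemma act_q (t : Fin 5 → ℂˣ) (a c : ℂ) :
    act t (q a c) =
      q (((t 2 * (t 1)⁻¹ : ℂˣ) : ℂ) * a) (((t 2 * (t 1)⁻¹ : ℂˣ) : ℂ) * c) := by
  unfold act q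
  refine Prod.ext ?_ (Prod.ext ?_ ?_)
  · show (ℂ ∙ (e 1 + a • e 2)).map (diagMap fun k => t ⟨k, by omega⟩ * t 3) = _
    rw [line_map]
    rw [show ((⟨(2:Fin 3).val, by omega⟩ : Fin 5)) = 2 from rfl,
        show ((⟨(1:Fin 3).val, by omega⟩ : Fin 5)) = 1 from rfl, ratio]
  · exact plane_map _
  · show (ℂ ∙ (e 1 + c • e 2)).map (diagMap fun k => t ⟨k, by omega⟩ * t 4) = _
    rw [line_map]
    rw [show ((⟨(2:Fin 3).val, by omega⟩ : Fin 5)) = 2 from rfl,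
        show ((⟨(1:Fin 3).val, by omega⟩ : Fin 5)) = 1 from rfl, ratio]

lemma line_inj {a a' : ℂ} (h : (ℂ ∙ (e 1 + a • e 2)) = ℂ ∙ (e 1 + a' • e 2)) : a = a' := by
  have hm : e 1 + a' • e 2 ∈ ℂ ∙ (e 1 + a • e 2) := by
    rw [h]; exact Submodule.mem_span_singleton_self _
  obtain ⟨r, hr⟩ := Submodule.mem_span_singleton.mp hm
  have h1 := congrFun hr 1
  have h2 := congrFun hr 2
  simp [e_apply] at h1 h2
  rw [h1, one_mul] at h2
  exact h2

lemma q_inj {a c a' c' : ℂ} (h : q a c = q a' c') : a = a' ∧ c = c' := by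
  rw [Prod.ext_iff, Prod.ext_iff] at h
  exact ⟨line_inj h.1, line_inj h.2.2⟩

lemma vne (a : ℂ) : e 1 + a • e 2 ≠ 0 := by
  intro h
  have := congrFun h 1
  simp [e_apply] at this

lemma mem_plane (a : ℂ) : e 1 + a • e 2 ∈ Submodule.span ℂ {e 1, e 2} := by
  refine Submodule.add_mem _ (Submodule.subset_span ?_)
    (Submodule.smul_mem _ _ (Submodule.subset_span ?_)) <;> simp

lemma finrank_plane : Module.finrank ℂ (Submodule.span ℂ {e 1, e 2}) = 2 := by
  have hr : Set.range ![e 1, e 2] = {e 1, e 2} := by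
    ext v
    simp [Set.range, Fin.exists_fin_two, eq_comm]
  have hli : LinearIndependent ℂ ![e 1, e 2] := by
    rw [LinearIndependent.pair_iff]
    intro s t hst
    have h1 := congrFun hst 1
    have h2 := congrFun hst 2
    simp [e_apply] at h1 h2
    exact ⟨h1, h2⟩
  have := finrank_span_eq_card hli
  rwa [hr] at this

lemma q_mem (a c : ℂ) : q a c ∈ grSink := by
  simp only [grSink, Set.mem_setOf_eq, q]
  refine ⟨?_, ?_, ?_, ?_, ?_⟩
  · rw [Submodule.span_le, Set.singleton_subset_iff]
    exact mem_plane a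
  · rw [Submodule.span_le, Set.singleton_subset_iff]
    exact mem_plane c
  · exact finrank_span_singleton (vne a)
  · exact finrank_plane
  · exact finrank_span_singleton (vne c)

/-- A usable description of the orbit of `q a c`. -/
lemma orbit_q (a c : ℂ) :
    orbit (q a c) = {y | ∃ s : ℂˣ, y = q ((s : ℂ) * a) ((s : ℂ) * c)} := by
  ext y
  constructor
  · rintro ⟨t, rfl⟩
    exact ⟨t 2 * (t 1)⁻¹, act_q t a c⟩
  · rintro ⟨s, rfl⟩
    refine ⟨fun j => if j = 2 then s else 1, ?_⟩
    rw [act_q]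
    norm_num [show (1 : Fin 5) ≠ 2 from by decide]

lemma q_mem_orbit_iff (a c : ℂ) (y : Submodule ℂ V3 × Submodule ℂ V3 × Submodule ℂ V3) :
    y ∈ orbit (q a c) ↔ ∃ s : ℂˣ, y = q ((s : ℂ) * a) ((s : ℂ) * c) := by
  rw [orbit_q]; rfl

lemma orbit_infinite {a c : ℂ} (h : ¬(a = 0 ∧ c = 0)) : (orbit (q a c)).Infinite := by
  have key : ∀ s s' : ℂˣ, q ((s : ℂ) * a) ((s : ℂ) * c) = q ((s' : ℂ) * a) ((s' : ℂ) * c) →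
      s = s' := by
    intro s s' hq
    obtain ⟨h1, h2⟩ := q_inj hq
    rcases not_and_or.mp h with ha | hc
    · exact Units.ext (mul_right_cancel₀ ha h1)
    · exact Units.ext (mul_right_cancel₀ hc h2)
  have : Function.Injective (fun n : ℕ =>
      q (((Units.mk0 ((n : ℂ) + 1) (Nat.cast_add_one_ne_zero n) : ℂˣ) : ℂ) * a)
        (((Units.mk0 ((n : ℂ) + 1) (Nat.cast_add_one_ne_zero n) : ℂˣ) : ℂ) * c)) := by
    intro n m hnm
    have := key _ _ hnm
    have : ((n : ℂ) + 1) = ((m : ℂ) + 1) := congrArg Units.val this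
    have : (n : ℂ) = (m : ℂ) := by
      have := add_right_cancel this
      exact this
    exact_mod_cast this
  refine Set.infinite_of_injective_forall_mem this ?_
  intro n
  rw [q_mem_orbit_iff]
  exact ⟨_, rfl⟩

lemma one_dim (a c : ℂ) (h : ¬(a = 0 ∧ c = 0)) : IsOneDimOrbitIn grSink (orbit (q a c)) := by
  refine ⟨⟨q a c, q_mem a c, rfl⟩, orbit_infinite h, ?_⟩
  intro x hx
  obtain ⟨s, rfl⟩ := (q_mem_orbit_iff a c x).mp hx
  refine ⟨![0, 0, 1, 0, 0], ?_⟩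
  have hact : ∀ z : ℂˣ, act (fun j => z ^ (![0, 0, 1, 0, 0] : Fin 5 → ℤ) j)
      (q ((s : ℂ) * a) ((s : ℂ) * c))
      = q ((z : ℂ) * ((s : ℂ) * a)) ((z : ℂ) * ((s : ℂ) * c)) := by
    intro z
    rw [act_q]
    norm_num
    rw [show (![0, 0, 1, 0, 0] : Fin 5 → ℤ) 2 = 1 from rfl, zpow_one]
  ext y
  rw [q_mem_orbit_iff]
  constructor
  · rintro ⟨u, rfl⟩
    refine ⟨u * s⁻¹, ?_⟩
    rw [hact]
    congr 1 <;> · simp [Units.val_mul]; field_simp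
  · rintro ⟨z, rfl⟩
    refine ⟨z * s, ?_⟩
    rw [hact]
    congr 1 <;> · simp [Units.val_mul]; ring

lemma orbits_distinct (a c a' c' : ℂ) (h : ¬(a = 0 ∧ c = 0)) (h' : ¬(a' = 0 ∧ c' = 0))
    (hd : a * c' ≠ a' * c) : orbit (q a c) ≠ orbit (q a' c') := by
  intro he
  have hm : q a' c' ∈ orbit (q a' c') := by
    rw [q_mem_orbit_iff]
    exact ⟨1, by norm_num⟩
  rw [← he, q_mem_orbit_iff] at hm
  obtain ⟨s, hs⟩ := hm
  obtain ⟨h1, h2⟩ := q_inj hs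
  apply hd
  rw [h1, h2]
  ring

/-- For `Q = 1 → 2 ← 3`, `M = ℂ³ → ℂ³ ← ℂ³` with identity maps,
`e = (1,2,1)` and the rank-`5` torus action above, the points `q_{a,c}` lie in
`Gr_e(M)`, satisfy `t.q_{a,c} = q_{(t₃/t₂)a,(t₃/t₂)c}`, have one-dimensional orbit for
`(a,c) ≠ (0,0)`, lie in distinct orbits for distinct `(a:c) ∈ ℙ¹`, and hence `Gr_e(M)`
contains infinitely many one-dimensional `T`-orbits; in particular the action is not
skeletal. -/
theorem two_sink_not_skeletal :
    (∀ a c : ℂ, q a c ∈ grSink) ∧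
    (∀ (t : Fin 5 → ℂˣ) (a c : ℂ),
      act t (q a c) =
        q (((t 2 * (t 1)⁻¹ : ℂˣ) : ℂ) * a) (((t 2 * (t 1)⁻¹ : ℂˣ) : ℂ) * c)) ∧
    (∀ a c : ℂ, ¬(a = 0 ∧ c = 0) → IsOneDimOrbitIn grSink (orbit (q a c))) ∧
    (∀ a c a' c' : ℂ, ¬(a = 0 ∧ c = 0) → ¬(a' = 0 ∧ c' = 0) → a * c' ≠ a' * c →
      orbit (q a c) ≠ orbit (q a' c')) ∧
    {O : Set (Submodule ℂ V3 × Submodule ℂ V3 × Submodule ℂ V3) |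
      IsOneDimOrbitIn grSink O}.Infinite := by
  refine ⟨q_mem, act_q, one_dim, orbits_distinct, ?_⟩
  have hinj : Function.Injective (fun a : ℂ => orbit (q a 1)) := by
    intro a a' hq
    by_contra hne
    exact orbits_distinct a 1 a' 1 (by simp) (by simp)
      (by simpa using hne) hq
  refine Set.infinite_of_injective_forall_mem hinj ?_
  intro a
  exact one_dim a 1 (by simp)

end QGExample
end
end
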